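/- For an NFA A with transitions labeled by vectors in ℤ^d, the Parikh image Ψ(A) (the set of sums of transition labels along accepting runs) is a semilinear subset of ℤ^d. -/

import Mathlib

/-- A linear set in a commutative monoid. -/
def IsLinearSet' {M : Type*} [AddCommMonoid M] (S : Set M) : Prop :=
  ∃ (b : M) (k : ℕ) (a : Fin k → M),
    S = {x | ∃ n : Fin k → ℕ, x = b + ∑ j : Fin k, n j • a j}

/-- A semilinear set: a finite union of linear sets. -/
def IsSemilinearSet' {M : Type*} [AddCommMonoid M] (S : Set M) : Prop :=
  ∃ (N : ℕ) (L : Fin N → Set M), (∀ t, IsLinearSet' (L t)) ∧ S = ⋃ t : Fin N, L t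

/-- An accepting run of an NFA `(Q, I, F, δ)` over ℤ^d, given as a list of
transitions: all transitions are in `δ`, consecutive transitions match at states,
the first transition starts in `I` and the last one ends in `F`; the empty run is
allowed when `I ∩ F ≠ ∅`. -/
def IsRun {d : ℕ} {Q : Type*} (I F : Set Q) (δ : Set (Q × (Fin d → ℤ) × Q))
    (r : List (Q × (Fin d → ℤ) × Q)) : Prop :=
  (∀ t ∈ r, t ∈ δ) ∧ r.Chain' (fun s t => s.2.2 = t.1) ∧
  ((r = [] ∧ (I ∩ F).Nonempty) ∨
    (∃ h l, r.head? = some h ∧ r.getLast? = some l ∧ h.1 ∈ I ∧ l.2.2 ∈ F))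

/-- The Parikh image of an NFA over ℤ^d: sums of labels over accepting runs. -/
def ParikhImage {d : ℕ} {Q : Type*} (I F : Set Q) (δ : Set (Q × (Fin d → ℤ) × Q)) :
    Set (Fin d → ℤ) :=
  {v | ∃ r, IsRun I F δ r ∧ (r.map (fun t => t.2.1)).sum = v}

namespace ParikhProof

variable {d : ℕ} {Q : Type*}

/-- Sum of the labels of a list of transitions. -/
def lsum (l : List (Q × (Fin d → ℤ) × Q)) : Fin d → ℤ := (l.map (fun t => t.2.1)).sum

/-- The start state followed by all target states of a walk. -/
def stv (p : Q) (l : List (Q × (Fin d → ℤ) × Q)) : List Q := p :: l.map (fun t => t.2.2)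

/-- All states mentioned in a list of transitions. -/
def allSt (l : List (Q × (Fin d → ℤ) × Q)) : List Q :=
  l.map (fun t => t.1) ++ l.map (fun t => t.2.2)

/-- A walk in the NFA from `p` to `q`. -/
inductive Walk (δ : Set (Q × (Fin d → ℤ) × Q)) : Q → Q → List (Q × (Fin d → ℤ) × Q) → Prop
  | nil (q : Q) : Walk δ q q []
  | cons {p q r : Q} {v : Fin d → ℤ} {l} :
      (p, v, q) ∈ δ → Walk δ q r l → Walk δ p r ((p, v, q) :: l)

variable {δ : Set (Q × (Fin d → ℤ) × Q)}

theorem lsum_nil : lsum ([] : List (Q × (Fin d → ℤ) × Q)) = 0 := rfl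

theorem lsum_append (l m : List (Q × (Fin d → ℤ) × Q)) : lsum (l ++ m) = lsum l + lsum m := by
  simp [lsum]

theorem Walk.append {p q r l m} (h1 : Walk δ p q l) (h2 : Walk δ q r m) :
    Walk δ p r (l ++ m) := by
  induction h1 with
  | nil => simpa using h2
  | cons ht _ ih => exact Walk.cons ht (ih h2)

theorem Walk.split {p r l m} (h : Walk δ p r (l ++ m)) : ∃ q, Walk δ p q l ∧ Walk δ q r m := by
  induction l generalizing p with
  | nil => exact ⟨p, Walk.nil p, by simpa using h⟩
  | cons t l ih =>
    cases h with
    | cons ht h' =>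
      obtain ⟨q, h1, h2⟩ := ih h'
      exact ⟨q, Walk.cons ht h1, h2⟩

theorem Walk.head_eq {p q t l} (h : Walk δ p q (t :: l)) : t.1 = p := by
  cases h; rfl

theorem mem_stv {p s : Q} {l : List (Q × (Fin d → ℤ) × Q)} : s ∈ stv p l ↔ s = p ∨ s ∈ l.map (fun t => t.2.2) := by
  simp [stv]

theorem Walk.mem_delta {p q l} (h : Walk δ p q l) : ∀ t ∈ l, t ∈ δ := by
  induction h with
  | nil => simp
  | cons ht _ ih =>
    intro t htl
    rcases List.mem_cons.1 htl with rfl | htl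
    · exact ht
    · exact ih t htl

theorem Walk.eq_of_nil {p q} (h : Walk δ p q []) : p = q := by cases h; rfl

theorem Walk.end_mem {p q l} (h : Walk δ p q l) : q ∈ stv p l := by
  induction h with
  | nil => simp [stv]
  | cons _ _ ih =>
    rcases mem_stv.1 ih with rfl | hm
    · exact mem_stv.2 (Or.inr (by simp))
    · exact mem_stv.2 (Or.inr (by simp [hm]))

theorem Walk.mem_stv_of_allSt {p q l s} (h : Walk δ p q l) (hs : s ∈ allSt l) :
    s ∈ stv p l := by
  induction h with
  | nil => simp [allSt] at hs
  | cons ht hw ih =>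
    simp only [allSt, List.map_cons, List.mem_append, List.mem_cons] at hs
    rcases hs with (rfl | hs) | (rfl | hs)
    · exact mem_stv.2 (Or.inl rfl)
    · rcases mem_stv.1 (ih (by simp only [allSt, List.mem_append]; exact Or.inl hs)) with rfl | hm
      · exact mem_stv.2 (Or.inr (by simp))
      · exact mem_stv.2 (Or.inr (by simp [hm]))
    · exact mem_stv.2 (Or.inr (by simp))
    · rcases mem_stv.1 (ih (by simp only [allSt, List.mem_append]; exact Or.inr hs)) with rfl | hm
      · exact mem_stv.2 (Or.inr (by simp))
      · exact mem_stv.2 (Or.inr (by simp [hm]))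

theorem mem_allSt {s : Q} {l : List (Q × (Fin d → ℤ) × Q)} :
    s ∈ allSt l ↔ (∃ t ∈ l, t.1 = s) ∨ ∃ t ∈ l, t.2.2 = s := by
  simp [allSt]

theorem mem_allSt_append {s : Q} {l m : List (Q × (Fin d → ℤ) × Q)} :
    s ∈ allSt (l ++ m) ↔ s ∈ allSt l ∨ s ∈ allSt m := by
  simp only [mem_allSt, List.mem_append]
  aesop

theorem Walk.cons_iff {p q : Q} {t} {l} (h : Walk δ p q (t :: l)) :
    t.1 = p ∧ t ∈ δ ∧ Walk δ t.2.2 q l := by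
  cases h with | cons ht h' => exact ⟨rfl, ht, h'⟩

theorem Walk.cons' {q : Q} {t : Q × (Fin d → ℤ) × Q} {l} (ht : t ∈ δ)
    (h : Walk δ t.2.2 q l) : Walk δ t.1 q (t :: l) := by
  obtain ⟨a, v, b⟩ := t
  exact Walk.cons ht h

theorem Walk.split_at_state {p q s w} (h : Walk δ p q w) (hs : s ∈ stv p w) :
    ∃ u v, w = u ++ v ∧ Walk δ p s u ∧ Walk δ s q v := by
  rcases mem_stv.1 hs with rfl | hm
  · exact ⟨[], w, rfl, Walk.nil s, h⟩
  · rcases List.mem_map.1 hm with ⟨t, htw, hts⟩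
    rcases List.append_of_mem htw with ⟨l1, l2, rfl⟩
    obtain ⟨m, h1, h2⟩ := h.split
    obtain ⟨hm1, ht, h2'⟩ := h2.cons_iff
    refine ⟨l1 ++ [t], l2, by simp, ?_, hts ▸ h2'⟩
    refine h1.append ?_
    have := Walk.cons' ht (Walk.nil t.2.2)
    rw [hm1, hts] at this
    exact this

theorem stv_subset_append_mid {p : Q} {u v c : List (Q × (Fin d → ℤ) × Q)} {s : Q}
    (hs : s ∈ stv p (u ++ v)) : s ∈ stv p (u ++ c ++ v) := by
  rcases mem_stv.1 hs with rfl | hm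
  · exact mem_stv.2 (Or.inl rfl)
  · simp only [List.map_append, List.mem_append] at hm
    refine mem_stv.2 (Or.inr ?_)
    simp only [List.map_append, List.mem_append]
    tauto

/-- Rotate a cycle at `a` so that it becomes a cycle at `s`. -/
theorem rotate_cycle {a s : Q} {c} (h : Walk δ a a c) (hs : s ∈ stv a c) :
    ∃ c', Walk δ s s c' ∧ lsum c' = lsum c ∧ ∀ x ∈ allSt c, x ∈ stv s c' := by
  obtain ⟨u, v, rfl, h1, h2⟩ := h.split_at_state hs
  refine ⟨v ++ u, h2.append h1, by rw [lsum_append, lsum_append, add_comm], ?_⟩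
  intro x hx
  rcases mem_allSt_append.1 hx with hx | hx
  · rcases mem_stv.1 (h1.mem_stv_of_allSt hx) with rfl | hm
    · rcases mem_stv.1 h2.end_mem with rfl | hm2
      · exact mem_stv.2 (Or.inl rfl)
      · exact mem_stv.2 (Or.inr (by simp only [List.map_append, List.mem_append]; exact Or.inl hm2))
    · exact mem_stv.2 (Or.inr (by simp only [List.map_append, List.mem_append]; exact Or.inr hm))
  · rcases mem_stv.1 (h2.mem_stv_of_allSt hx) with rfl | hm
    · exact mem_stv.2 (Or.inl rfl)
    · exact mem_stv.2 (Or.inr (by simp only [List.map_append, List.mem_append]; exact Or.inl hm))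

/-- Power of a cycle: `n+1` copies. -/
theorem cycle_pow {s : Q} {c} (h : Walk δ s s c) (n : ℕ) :
    ∃ cc, Walk δ s s cc ∧ lsum cc = (n + 1) • lsum c ∧ ∀ x ∈ stv s c, x ∈ stv s cc := by
  induction n with
  | zero => exact ⟨c, h, by simp, fun x hx => hx⟩
  | succ n ih =>
    obtain ⟨cc, hcc, hsum, hst⟩ := ih
    refine ⟨c ++ cc, h.append hcc, ?_, ?_⟩
    · rw [lsum_append, hsum]
      simp only [succ_nsmul]
      abel
    · intro x hx
      rcases mem_stv.1 hx with rfl | hm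
      · exact mem_stv.2 (Or.inl rfl)
      · exact mem_stv.2 (Or.inr (by simp only [List.map_append, List.mem_append]; exact Or.inl hm))

open Classical in
/-- Insert without duplication (classical). -/
noncomputable def cins {α : Type*} (c : α) (C : List α) : List α :=
  if c ∈ C then C else c :: C

theorem mem_cins_self {α : Type*} (c : α) (C : List α) : c ∈ cins c C := by
  unfold cins; split <;> simp [*]

theorem subset_cins {α : Type*} (c : α) (C : List α) : ∀ x ∈ C, x ∈ cins c C := by
  unfold cins; split <;> simp +contextual [*]

theorem cins_nodup {α : Type*} {c : α} {C : List α} (h : C.Nodup) : (cins c C).Nodup := by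
  unfold cins; split
  · exact h
  · exact List.nodup_cons.2 ⟨by assumption, h⟩

theorem mem_of_mem_cins {α : Type*} {c x : α} {C : List α} (h : x ∈ cins c C) :
    x = c ∨ x ∈ C := by
  unfold cins at h; split at h
  · exact Or.inr h
  · rcases List.mem_cons.1 h with h | h
    · exact Or.inl h
    · exact Or.inr h

/-- A short nonempty cycle of the automaton. -/
def IsCyc (δ : Set (Q × (Fin d → ℤ) × Q)) (n0 : ℕ) (c : List (Q × (Fin d → ℤ) × Q)) : Prop :=
  c ≠ [] ∧ c.length ≤ n0 ∧ ∃ a, Walk δ a a c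

/-- The connectivity condition: each cycle in the list shares a state with the base `B`
or with a later cycle of the list. -/
inductive Conn (B : List Q) : List (List (Q × (Fin d → ℤ) × Q)) → Prop
  | nil : Conn B []
  | cons {C c} : Conn B C →
      (∃ s ∈ allSt c, s ∈ B ∨ ∃ c' ∈ C, s ∈ allSt c') → Conn B (c :: C)

theorem Conn.cins {B : List Q} {C} {c : List (Q × (Fin d → ℤ) × Q)} (h : Conn B C)
    (hc : ∃ s ∈ allSt c, s ∈ B ∨ ∃ c' ∈ C, s ∈ allSt c') : Conn B (ParikhProof.cins c C) := by
  unfold ParikhProof.cins; split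
  · exact h
  · exact Conn.cons h hc

/-- Completeness: every combination described by a connected family is realized by a walk. -/
theorem complete {p q : Q} {r : List (Q × (Fin d → ℤ) × Q)} {n0 : ℕ}
    {C : List (List (Q × (Fin d → ℤ) × Q))}
    (hw : Walk δ p q r) (hcyc : ∀ c ∈ C, IsCyc δ n0 c) (hconn : Conn (stv p r) C)
    (n : List (Q × (Fin d → ℤ) × Q) → ℕ) :
    ∃ w, Walk δ p q w ∧
      lsum w = lsum r + (C.map (fun c => (1 + n c) • lsum c)).sum ∧
      (∀ s ∈ stv p r, s ∈ stv p w) ∧ (∀ c ∈ C, ∀ s ∈ allSt c, s ∈ stv p w) := by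
  induction hconn with
  | nil => exact ⟨r, hw, by simp, fun s hs => hs, by simp⟩
  | @cons C c hconn hshare ih =>
    obtain ⟨w0, hw0, hsum0, hstB, hstC⟩ := ih (fun c' hc' => hcyc c' (by simp [hc']))
    obtain ⟨s, hsc, hscov⟩ := hshare
    have hsw0 : s ∈ stv p w0 := by
      rcases hscov with hB | ⟨c', hc', hsc'⟩
      · exact hstB s hB
      · exact hstC c' hc' s hsc'
    obtain ⟨hne, hlen, a, hca⟩ := hcyc c (by simp)
    have hsac : s ∈ stv a c := hca.mem_stv_of_allSt hsc
    obtain ⟨c2, hc2, hc2sum, hc2st⟩ := rotate_cycle hca hsac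
    obtain ⟨cc, hcc, hccsum, hccst⟩ := cycle_pow hc2 (n c)
    obtain ⟨u, v, rfl, hu, hv⟩ := hw0.split_at_state hsw0
    refine ⟨u ++ cc ++ v, (hu.append hcc).append hv, ?_, ?_, ?_⟩
    · rw [lsum_append, lsum_append]
      rw [lsum_append] at hsum0
      simp only [List.map_cons, List.sum_cons]
      rw [add_comm (n c) 1] at *
      calc lsum u + lsum cc + lsum v = (lsum u + lsum v) + lsum cc := by abel
        _ = lsum r + (List.map (fun c => (1 + n c) • lsum c) C).sum + (1 + n c) • lsum c := by
              rw [hsum0, hccsum, hc2sum]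
        _ = lsum r + ((1 + n c) • lsum c + (List.map (fun c => (1 + n c) • lsum c) C).sum) := by
              abel
    · intro x hx
      exact stv_subset_append_mid (hstB x hx)
    · intro c' hc' x hx
      rcases List.mem_cons.1 hc' with rfl | hc'
      · have hx2 : x ∈ stv s cc := hccst x (hc2st x hx)
        rcases mem_stv.1 hx2 with rfl | hm
        · exact stv_subset_append_mid (by
            rcases mem_stv.1 hu.end_mem with rfl | hm2
            · exact mem_stv.2 (Or.inl rfl)
            · exact mem_stv.2 (Or.inr (by simp only [List.map_append, List.mem_append]; exact Or.inl hm2)))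
        · refine mem_stv.2 (Or.inr ?_)
          simp only [List.map_append, List.mem_append]
          exact Or.inl (Or.inr hm)
      · exact stv_subset_append_mid (hstC c' hc' x hx)

theorem exists_first_split {α : Type*} {a : α} {l : List α} (h : a ∈ l) :
    ∃ m1 m2, l = m1 ++ a :: m2 ∧ a ∉ m1 := by
  induction l with
  | nil => simp at h
  | cons b t ih =>
    rcases Classical.em (a = b) with rfl | hne
    · exact ⟨[], t, rfl, by simp⟩
    · rcases List.mem_cons.1 h with rfl | h
      · exact absurd rfl hne
      · obtain ⟨m1, m2, rfl, hna⟩ := ih h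
        exact ⟨b :: m1, m2, rfl, by simp [hne, hna]⟩

theorem exists_dup {α : Type*} {l : List α} (h : ¬ l.Nodup) :
    ∃ x l1 l2 l3, l = l1 ++ x :: l2 ++ x :: l3 ∧ (x :: l2).Nodup := by
  induction l with
  | nil => exact absurd List.nodup_nil h
  | cons a t ih =>
    rcases Classical.em t.Nodup with ht | ht
    · have ha : a ∈ t := by
        by_contra ha
        exact h (List.nodup_cons.2 ⟨ha, ht⟩)
      obtain ⟨m1, m2, rfl, hna⟩ := exists_first_split ha
      refine ⟨a, [], m1, m2, by simp, List.nodup_cons.2 ⟨hna, ?_⟩⟩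
      exact ((List.sublist_append_left m1 (a :: m2)).nodup ht)
    · obtain ⟨x, l1, l2, l3, rfl, hnd⟩ := ih ht
      exact ⟨x, a :: l1, l2, l3, rfl, hnd⟩

theorem nodup_length_le_card {l : List Q} (hQ : Finite Q) (h : l.Nodup) :
    l.length ≤ Nat.card Q := by
  letI := Fintype.ofFinite Q
  rw [Nat.card_eq_fintype_card]
  exact h.length_le_card

theorem LL_step {r : List (Q × (Fin d → ℤ) × Q)} {C : List (List (Q × (Fin d → ℤ) × Q))}
    (hC : C.Nodup) (c : List (Q × (Fin d → ℤ) × Q))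
    (n : List (Q × (Fin d → ℤ) × Q) → ℕ) :
    ∃ n' : List (Q × (Fin d → ℤ) × Q) → ℕ, lsum r + (C.map (fun c' => (1 + n c') • lsum c')).sum + lsum c
        = lsum r + ((cins c C).map (fun c' => (1 + n' c') • lsum c')).sum := by
  classical
  by_cases h : c ∈ C
  · obtain ⟨C1, C2, rfl, hnot1⟩ := exists_first_split h
    have hnot2 : c ∉ C2 :=
      (List.nodup_cons.1 (List.nodup_append.1 hC).2.1).1
    refine ⟨fun y => if y = c then n y + 1 else n y, ?_⟩
    unfold cins
    rw [if_pos h]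
    simp only [List.map_append, List.sum_append, List.map_cons, List.sum_cons]
    have e1 : C1.map (fun c' => (1 + if c' = c then n c' + 1 else n c') • lsum c')
        = C1.map (fun c' => (1 + n c') • lsum c') := by
      apply List.map_congr_left
      intro y hy
      have : y ≠ c := fun hyc => hnot1 (hyc ▸ hy)
      simp [this]
    have e2 : C2.map (fun c' => (1 + if c' = c then n c' + 1 else n c') • lsum c')
        = C2.map (fun c' => (1 + n c') • lsum c') := by
      apply List.map_congr_left
      intro y hy
      have : y ≠ c := fun hyc => hnot2 (hyc ▸ hy)
      simp [this]
    rw [e1, e2]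
    simp only [eq_self_iff_true, if_true]
    have e3 : (1 + (n c + 1)) • lsum c = (1 + n c) • lsum c + lsum c := by
      rw [show 1 + (n c + 1) = (1 + n c) + 1 from by omega, succ_nsmul]
    rw [e3]
    abel
  · refine ⟨fun y => if y = c then 0 else n y, ?_⟩
    unfold cins
    rw [if_neg h]
    simp only [List.map_cons, List.sum_cons]
    have e1 : C.map (fun c' => (1 + if c' = c then 0 else n c') • lsum c')
        = C.map (fun c' => (1 + n c') • lsum c') := by
      apply List.map_congr_left
      intro y hy
      have : y ≠ c := fun hyc => h (hyc ▸ hy)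
      simp [this]
    rw [e1]
    simp only [eq_self_iff_true, if_true]
    simp only [Nat.add_zero, one_smul]
    abel

/-- Soundness: every walk's label sum lies in a linear set indexed by a short walk and a
nodup connected list of short cycles. -/
theorem sound (hQ : Finite Q) :
    ∀ (N : ℕ) (w : List (Q × (Fin d → ℤ) × Q)) (p q : Q), Walk δ p q w → w.length ≤ N →
    ∃ r C, ∃ n : List (Q × (Fin d → ℤ) × Q) → ℕ, Walk δ p q r ∧ r.length ≤ Nat.card Q ∧
      C.Nodup ∧ (∀ c ∈ C, IsCyc δ (Nat.card Q) c) ∧ Conn (stv p r) C ∧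
      (∀ s ∈ stv p w, s ∈ stv p r ∨ ∃ c ∈ C, s ∈ allSt c) ∧
      lsum w = lsum r + (C.map (fun c => (1 + n c) • lsum c)).sum := by
  have base : ∀ (w : List (Q × (Fin d → ℤ) × Q)) (p q : Q), Walk δ p q w →
      w.length ≤ Nat.card Q →
      ∃ r C, ∃ n : List (Q × (Fin d → ℤ) × Q) → ℕ, Walk δ p q r ∧ r.length ≤ Nat.card Q ∧
      C.Nodup ∧ (∀ c ∈ C, IsCyc δ (Nat.card Q) c) ∧ Conn (stv p r) C ∧
      (∀ s ∈ stv p w, s ∈ stv p r ∨ ∃ c ∈ C, s ∈ allSt c) ∧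
      lsum w = lsum r + (C.map (fun c => (1 + n c) • lsum c)).sum := by
    intro w p q hw hlen
    exact ⟨w, [], fun _ => 0, hw, hlen, List.nodup_nil, by simp, Conn.nil,
      fun s hs => Or.inl hs, by simp⟩
  intro N
  induction N with
  | zero =>
    intro w p q hw hlen
    exact base w p q hw (le_trans hlen (Nat.zero_le _))
  | succ N ih =>
    intro w p q hw hlen
    by_cases hsh : w.length ≤ Nat.card Q
    · exact base w p q hw hsh
    push_neg at hsh
    have hnd : ¬ (w.map (fun t => t.1)).Nodup := by
      intro hnd
      have := nodup_length_le_card hQ hnd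
      rw [List.length_map] at this
      omega
    obtain ⟨x, s1, s2, s3, hmap, hxs2⟩ := exists_dup hnd
    rw [show s1 ++ x :: s2 ++ x :: s3 = s1 ++ ((x :: s2) ++ (x :: s3)) from by simp] at hmap
    obtain ⟨w1, w23, rfl, hm1, hm23⟩ := List.map_eq_append_iff.1 hmap
    obtain ⟨w2, w3, rfl, hm2, hm3⟩ := List.map_eq_append_iff.1 hm23
    obtain ⟨t2, w2', rfl, ht2, hm2'⟩ := List.map_eq_cons_iff.1 hm2
    obtain ⟨t3, w3', rfl, ht3, hm3'⟩ := List.map_eq_cons_iff.1 hm3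
    obtain ⟨m1, hw1, hw23⟩ := hw.split
    obtain ⟨m2, hw2, hw3⟩ := hw23.split
    have hm1x : m1 = x := by rw [← hw2.head_eq, ht2]
    have hm2x : m2 = x := by rw [← hw3.head_eq, ht3]
    rw [hm1x] at hw1 hw2
    rw [hm2x] at hw2 hw3
    -- the extracted cycle
    set c : List (Q × (Fin d → ℤ) × Q) := t2 :: w2' with hc
    have hcyc : IsCyc δ (Nat.card Q) c := by
      refine ⟨by simp [hc], ?_, x, hw2⟩
      have : c.length = (x :: s2).length := by rw [← hm2, List.length_map]
      rw [this]
      exact nodup_length_le_card hQ hxs2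
    -- the residual walk
    have hw' : Walk δ p q (w1 ++ (t3 :: w3')) := hw1.append hw3
    have hlen' : (w1 ++ (t3 :: w3')).length ≤ N := by
      have h1 : (w1 ++ ((t2 :: w2') ++ (t3 :: w3'))).length ≤ N + 1 := hlen
      simp only [List.length_append, List.length_cons] at h1 ⊢
      omega
    obtain ⟨r, C, n, hr, hrlen, hCnd, hCcyc, hconn, hcov, hsum⟩ :=
      ih (w1 ++ (t3 :: w3')) p q hw' hlen'
    -- x is in the residual walk and in the cycle
    have hxres : x ∈ stv p (w1 ++ (t3 :: w3')) := by
      rcases mem_stv.1 hw1.end_mem with rfl | hm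
      · exact mem_stv.2 (Or.inl rfl)
      · exact mem_stv.2 (Or.inr (by simp only [List.map_append, List.mem_append]; exact Or.inl hm))
    have hxc : x ∈ allSt c := mem_allSt.2 (Or.inl ⟨t2, by simp [hc], ht2⟩)
    obtain ⟨n', hn'⟩ := LL_step hCnd c n
    refine ⟨r, cins c C, n', hr, hrlen, cins_nodup hCnd, ?_, ?_, ?_, ?_⟩
    · intro c' hc'
      rcases mem_of_mem_cins hc' with rfl | hc'
      · exact hcyc
      · exact hCcyc c' hc'
    · exact hconn.cins ⟨x, hxc, hcov x hxres⟩
    · intro s hs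
      rcases mem_stv.1 hs with rfl | hm
      · rcases hcov s (mem_stv.2 (Or.inl rfl)) with h | ⟨c0, hc0, hsc0⟩
        · exact Or.inl h
        · exact Or.inr ⟨c0, subset_cins c C c0 hc0, hsc0⟩
      · simp only [List.map_append, List.mem_append] at hm
        rcases hm with hm | hm | hm
        · rcases hcov s (mem_stv.2 (Or.inr (by
            simp only [List.map_append, List.mem_append]; exact Or.inl hm))) with h | ⟨c0, hc0, hsc0⟩
          · exact Or.inl h
          · exact Or.inr ⟨c0, subset_cins c C c0 hc0, hsc0⟩
        · refine Or.inr ⟨c, mem_cins_self c C, ?_⟩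
          rcases List.mem_map.1 hm with ⟨t, htm, hts⟩
          exact mem_allSt.2 (Or.inr ⟨t, htm, hts⟩)
        · rcases hcov s (mem_stv.2 (Or.inr (by
            simp only [List.map_append, List.mem_append]; exact Or.inr hm))) with h | ⟨c0, hc0, hsc0⟩
          · exact Or.inl h
          · exact Or.inr ⟨c0, subset_cins c C c0 hc0, hsc0⟩
    · have : lsum (w1 ++ ((t2 :: w2') ++ (t3 :: w3')))
          = lsum (w1 ++ (t3 :: w3')) + lsum c := by
        simp only [lsum_append, hc]
        abel
      rw [this, hsum]
      exact hn'

theorem walk_chain' {p q w} (h : Walk δ p q w) : w.Chain' (fun s t => s.2.2 = t.1) := by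
  induction h with
  | nil => exact List.isChain_nil
  | @cons p q r v l ht hw ih =>
    refine List.isChain_cons.2 ⟨?_, ih⟩
    intro b hb
    cases l with
    | nil => simp at hb
    | cons t l' =>
      simp only [List.head?_cons, Option.mem_def, Option.some.injEq] at hb
      subst hb
      exact (hw.head_eq).symm

theorem walk_head {p q w} (h : Walk δ p q w) (hne : w ≠ []) : (w.head hne).1 = p := by
  cases w with
  | nil => exact absurd rfl hne
  | cons t l => exact h.head_eq

theorem walk_getLast {p q w} (h : Walk δ p q w) (hne : w ≠ []) : (w.getLast hne).2.2 = q := by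
  induction h with
  | nil => exact absurd rfl hne
  | @cons p' q' r' v' l ht hw ih =>
    cases l with
    | nil =>
      simp only [List.getLast_singleton]
      exact hw.eq_of_nil
    | cons t l' =>
      rw [List.getLast_cons (by simp)]
      exact ih (by simp)

theorem chain_walk : ∀ (r : List (Q × (Fin d → ℤ) × Q)) (hne : r ≠ []),
    (∀ t ∈ r, t ∈ δ) → r.Chain' (fun s t => s.2.2 = t.1) →
    Walk δ (r.head hne).1 ((r.getLast hne).2.2) r := by
  intro r
  induction r with
  | nil => intro hne; exact absurd rfl hne
  | cons t r' ih =>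
    intro hne hδr hch
    cases r' with
    | nil =>
      simpa using Walk.cons' (hδr t (by simp)) (Walk.nil t.2.2)
    | cons t' r'' =>
      have hch' := List.isChain_cons_cons.1 hch
      have hw' := ih (by simp) (fun x hx => hδr x (by simp [hx])) hch'.2
      have hW : Walk δ t.2.2 (((t' :: r'').getLast (by simp)).2.2) (t' :: r'') := by
        have : (t' :: r'').head (by simp) = t' := rfl
        rw [this] at hw'
        rw [hch'.1]
        exact hw'
      have := Walk.cons' (hδr t (by simp)) hW
      rw [List.getLast_cons (by simp)]
      exact this

theorem parikh_iff {I F : Set Q} {v : Fin d → ℤ} :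
    v ∈ ParikhImage I F δ ↔ ∃ p q, p ∈ I ∧ q ∈ F ∧ ∃ w, Walk δ p q w ∧ lsum w = v := by
  constructor
  · rintro ⟨r, ⟨hδr, hch, hcase⟩, hsum⟩
    rcases hcase with ⟨rfl, x, hxI, hxF⟩ | ⟨h, l, hh, hl, hI, hF⟩
    · exact ⟨x, x, hxI, hxF, [], Walk.nil x, hsum⟩
    · have hne : r ≠ [] := by rintro rfl; simp at hh
      have hh' : h = r.head hne := by
        rw [List.head?_eq_head hne] at hh
        exact (Option.some_injective _ hh).symm
      have hl' : l = r.getLast hne := by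
        rw [List.getLast?_eq_getLast hne] at hl
        exact (Option.some_injective _ hl).symm
      refine ⟨h.1, l.2.2, hI, hF, r, ?_, hsum⟩
      rw [hh', hl']
      exact chain_walk r hne hδr hch
  · rintro ⟨p, q, hp, hq, w, hw, hsum⟩
    refine ⟨w, ⟨hw.mem_delta, walk_chain' hw, ?_⟩, hsum⟩
    cases w with
    | nil =>
      exact Or.inl ⟨rfl, p, hp, hw.eq_of_nil ▸ hq⟩
    | cons t l =>
      refine Or.inr ⟨(t :: l).head (by simp), (t :: l).getLast (by simp), ?_, ?_, ?_, ?_⟩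
      · exact List.head?_eq_head _
      · exact List.getLast?_eq_getLast _
      · rw [walk_head hw]; exact hp
      · rw [walk_getLast hw]; exact hq

theorem isLinearSet_list {M : Type*} [AddCommMonoid M] {α : Type*} (b : M) :
    ∀ (C : List α), C.Nodup → ∀ (v : α → M),
    IsLinearSet' {x | ∃ n : α → ℕ, x = b + (C.map (fun c => n c • v c)).sum} := by
  intro C
  induction C generalizing b with
  | nil =>
    intro _ v
    refine ⟨b, 0, fun j => j.elim0, ?_⟩
    ext x
    simp only [Set.mem_setOf_eq, List.map_nil, List.sum_nil, add_zero]
    constructor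
    · rintro ⟨n, rfl⟩
      exact ⟨fun j => 0, by simp⟩
    · rintro ⟨n, hx⟩
      exact ⟨fun _ => 0, by simpa using hx⟩
  | cons c C ih =>
    intro hnd v
    have hcC : c ∉ C := (List.nodup_cons.1 hnd).1
    obtain ⟨b', k, a, heq⟩ := ih b (List.nodup_cons.1 hnd).2 v
    refine ⟨b', k + 1, Fin.cons (v c) a, ?_⟩
    ext x
    simp only [Set.mem_setOf_eq, List.map_cons, List.sum_cons]
    constructor
    · rintro ⟨n, rfl⟩
      have hy : b + (C.map (fun c' => n c' • v c')).sum ∈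
          {x | ∃ n : α → ℕ, x = b + (C.map (fun c' => n c' • v c')).sum} := ⟨n, rfl⟩
      rw [heq] at hy
      obtain ⟨m, hy⟩ := hy
      refine ⟨Fin.cons (n c) m, ?_⟩
      rw [Fin.sum_univ_succ]
      simp only [Fin.cons_zero, Fin.cons_succ]
      rw [← add_assoc, add_comm (b) (n c • v c), add_assoc, hy]
      abel
    · rintro ⟨m, rfl⟩
      classical
      have hy : b' + ∑ j : Fin k, m j.succ • a j ∈
          {x | ∃ n : Fin k → ℕ, x = b' + ∑ j : Fin k, n j • a j} := ⟨fun j => m j.succ, rfl⟩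
      rw [← heq] at hy
      obtain ⟨n, hy⟩ := hy
      refine ⟨fun y => if y = c then m 0 else n y, ?_⟩
      have e1 : C.map (fun c' => (if c' = c then m 0 else n c') • v c')
          = C.map (fun c' => n c' • v c') := by
        apply List.map_congr_left
        intro y hy'
        have : y ≠ c := fun hyc => hcC (hyc ▸ hy')
        simp [this]
      rw [e1, Fin.sum_univ_succ]
      simp only [Fin.cons_zero, Fin.cons_succ, eq_self_iff_true, if_true]
      rw [← add_assoc, add_comm b' (m 0 • v c), add_assoc, hy]
      abel

theorem list_sum_split {M : Type*} [AddCommMonoid M] {α : Type*} (C : List α) (n : α → ℕ)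
    (v : α → M) :
    (C.map (fun c => (1 + n c) • v c)).sum
      = (C.map v).sum + (C.map (fun c => n c • v c)).sum := by
  induction C with
  | nil => simp
  | cons c C ih =>
    simp only [List.map_cons, List.sum_cons]
    rw [ih, add_nsmul, one_smul]
    abel

theorem isLinearSet_LL {r : List (Q × (Fin d → ℤ) × Q)} {C : List (List (Q × (Fin d → ℤ) × Q))}
    (hC : C.Nodup) :
    IsLinearSet' {x : Fin d → ℤ | ∃ n : List (Q × (Fin d → ℤ) × Q) → ℕ,
      x = lsum r + (C.map (fun c => (1 + n c) • lsum c)).sum} := by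
  have h := isLinearSet_list (lsum r + (C.map lsum).sum) C hC lsum
  have e : {x : Fin d → ℤ | ∃ n : List (Q × (Fin d → ℤ) × Q) → ℕ,
      x = lsum r + (C.map (fun c => (1 + n c) • lsum c)).sum}
      = {x | ∃ n : List (Q × (Fin d → ℤ) × Q) → ℕ,
      x = (lsum r + (C.map lsum).sum) + (C.map (fun c => n c • lsum c)).sum} := by
    ext x
    refine exists_congr fun n => ?_
    rw [list_sum_split, add_assoc]
  rw [e]
  exact h

theorem finite_lists {α : Type*} {S : Set α} (hS : S.Finite) :
    ∀ k : ℕ, {l : List α | (∀ x ∈ l, x ∈ S) ∧ l.length ≤ k}.Finite := by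
  intro k
  induction k with
  | zero =>
    refine Set.Finite.subset (Set.finite_singleton []) ?_
    rintro l ⟨h1, h2⟩
    simp only [Nat.le_zero, List.length_eq_zero_iff] at h2
    simp [h2]
  | succ k ih =>
    refine Set.Finite.subset (Set.Finite.insert [] (Set.Finite.image2 List.cons hS ih)) ?_
    rintro l ⟨h1, h2⟩
    cases l with
    | nil => simp
    | cons a t =>
      refine Set.mem_insert_iff.2 (Or.inr ?_)
      refine Set.mem_image2.2 ⟨a, h1 a (by simp), t, ⟨fun x hx => h1 x (by simp [hx]), ?_⟩, rfl⟩
      simp only [List.length_cons] at h2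
      omega

theorem nodup_subset_length_le {α : Type*} {S : Set α} (hS : S.Finite) {l : List α}
    (h1 : l.Nodup) (h2 : ∀ x ∈ l, x ∈ S) : l.length ≤ hS.toFinset.card := by
  classical
  rw [← List.toFinset_card_of_nodup h1]
  apply Finset.card_le_card
  intro x hx
  simp only [List.mem_toFinset] at hx
  simp [h2 x hx]

theorem isSemilinear_iUnion {M : Type*} [AddCommMonoid M] {ι : Type*} [Finite ι]
    (S : ι → Set M) (h : ∀ i, IsLinearSet' (S i)) : IsSemilinearSet' (⋃ i, S i) := by
  obtain ⟨N, ⟨e⟩⟩ := Finite.exists_equiv_fin ι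
  refine ⟨N, fun t => S (e.symm t), fun t => h _, ?_⟩
  ext x
  simp only [Set.mem_iUnion]
  constructor
  · rintro ⟨i, hi⟩
    exact ⟨e i, by simpa using hi⟩
  · rintro ⟨t, ht⟩
    exact ⟨e.symm t, ht⟩

/-- Index set for the semilinear decomposition: short walks plus connected nodup
families of short cycles. -/
def IdxSet (I F : Set Q) (δ : Set (Q × (Fin d → ℤ) × Q)) :
    Set (Q × Q × List (Q × (Fin d → ℤ) × Q) × List (List (Q × (Fin d → ℤ) × Q))) :=
  {x | x.1 ∈ I ∧ x.2.1 ∈ F ∧ Walk δ x.1 x.2.1 x.2.2.1 ∧ x.2.2.1.length ≤ Nat.card Q ∧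
    x.2.2.2.Nodup ∧ (∀ c ∈ x.2.2.2, IsCyc δ (Nat.card Q) c) ∧
    Conn (stv x.1 x.2.2.1) x.2.2.2}

/-- The linear set associated with an index. -/
def LSet (x : Q × Q × List (Q × (Fin d → ℤ) × Q) × List (List (Q × (Fin d → ℤ) × Q))) :
    Set (Fin d → ℤ) :=
  {y | ∃ n : List (Q × (Fin d → ℤ) × Q) → ℕ,
    y = lsum x.2.2.1 + (x.2.2.2.map (fun c => (1 + n c) • lsum c)).sum}

theorem idxSet_finite (hQ : Finite Q) {I F : Set Q} (hδ : δ.Finite) : (IdxSet I F δ).Finite := by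
  haveI := hQ
  have hWS := finite_lists hδ (Nat.card Q)
  have hCLS := finite_lists hWS hWS.toFinset.card
  apply Set.Finite.subset ((Set.finite_univ).prod ((Set.finite_univ).prod (hWS.prod hCLS)))
  rintro ⟨p, q, r, C⟩ ⟨hp, hq, hwr, hlen, hnd, hcyc, hconn⟩
  refine ⟨Set.mem_univ _, Set.mem_univ _, ⟨hwr.mem_delta, hlen⟩, ?_, ?_⟩
  · intro c hc
    obtain ⟨-, hlenc, a, hwa⟩ := hcyc c hc
    exact ⟨hwa.mem_delta, hlenc⟩
  · refine nodup_subset_length_le hWS hnd ?_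
    intro c hc
    obtain ⟨-, hlenc, a, hwa⟩ := hcyc c hc
    exact ⟨hwa.mem_delta, hlenc⟩

theorem parikh_eq_iUnion (hQ : Finite Q) (I F : Set Q) :
    ParikhImage I F δ = ⋃ i : ↥(IdxSet I F δ), LSet i.1 := by
  ext v
  constructor
  · intro hv
    obtain ⟨p, q, hp, hq, w, hw, hsum⟩ := parikh_iff.1 hv
    obtain ⟨r, C, n, hr, hrlen, hnd, hcyc, hconn, hcov, hws⟩ :=
      sound hQ w.length w p q hw le_rfl
    refine Set.mem_iUnion.2 ⟨⟨(p, q, r, C), hp, hq, hr, hrlen, hnd, hcyc, hconn⟩, ⟨n, ?_⟩⟩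
    rw [← hsum, hws]
  · intro hv
    obtain ⟨i, hvi⟩ := Set.mem_iUnion.1 hv
    obtain ⟨⟨p, q, r, C⟩, hp, hq, hr, hrlen, hnd, hcyc, hconn⟩ := i
    obtain ⟨n, hvn⟩ := hvi
    obtain ⟨w, hw, hws, -, -⟩ := complete hr hcyc hconn n
    exact parikh_iff.2 ⟨p, q, hp, hq, w, hw, by rw [hws, ← hvn]⟩

end ParikhProof

/-- Parikh's theorem: the Parikh image of an NFA over ℤ^d is
semilinear. -/
theorem stmt_7 {d : ℕ} {Q : Type*} (hQ : Finite Q)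
    (I F : Set Q) (δ : Set (Q × (Fin d → ℤ) × Q)) (hδ : δ.Finite) :
    IsSemilinearSet' (ParikhImage I F δ) := by
  haveI := hQ
  rw [ParikhProof.parikh_eq_iUnion hQ I F]
  haveI : Finite ↥(ParikhProof.IdxSet I F δ) := (ParikhProof.idxSet_finite hQ hδ).to_subtype
  refine ParikhProof.isSemilinear_iUnion _ ?_
  intro i
  obtain ⟨x, -, -, -, -, hnd, -, -⟩ := i
  exact ParikhProof.isLinearSet_LL hnd
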